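/- The relation ℛ on probability laws on [0,∞) with finite expectation, defined by Π₁ ℛ Π₂ iff there exists a martingale (X₁, X₂) with marginals Π₁ and Π₂, is transitive: if Π₁ ℛ Π₂ and Π₂ ℛ Π₃, then Π₁ ℛ Π₃. -/

import Mathlib

open MeasureTheory Set

/-- `MartRel μ₁ μ₂` holds iff there is a martingale pair `(X₁, X₂)` on some probability
space with `X₁ ~ μ₁` and `X₂ ~ μ₂`. -/
def MartRel (μ₁ μ₂ : Measure ℝ) : Prop :=
  ∃ (Ω : Type) (_ : MeasurableSpace Ω) (P : Measure Ω), IsProbabilityMeasure P ∧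
    ∃ X₁ X₂ : Ω → ℝ, Measurable X₁ ∧ Measurable X₂ ∧
      Integrable X₁ P ∧ Integrable X₂ P ∧
      P.map X₁ = μ₁ ∧ P.map X₂ = μ₂ ∧
      P[X₂ | MeasurableSpace.comap X₁ Real.measurableSpace] =ᵐ[P] X₁

open ProbabilityTheory in
/-- Transitivity of the martingale relation: if `Π₁ ℛ Π₂` and `Π₂ ℛ Π₃` then `Π₁ ℛ Π₃`. -/
theorem martRel_trans (μ₁ μ₂ μ₃ : Measure ℝ)
    [IsProbabilityMeasure μ₁] [IsProbabilityMeasure μ₂] [IsProbabilityMeasure μ₃]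
    (hsupp₁ : μ₁ (Set.Iio 0) = 0) (hsupp₂ : μ₂ (Set.Iio 0) = 0) (hsupp₃ : μ₃ (Set.Iio 0) = 0)
    (hint₁ : Integrable id μ₁) (hint₂ : Integrable id μ₂) (hint₃ : Integrable id μ₃)
    (h₁₂ : MartRel μ₁ μ₂) (h₂₃ : MartRel μ₂ μ₃) :
    MartRel μ₁ μ₃ := by
  classical
  obtain ⟨Ω, mΩ, P, hP, X₁, X₂, hX₁, hX₂, hiX₁, hiX₂, hmapX₁, hmapX₂, hmart⟩ := h₁₂
  obtain ⟨Ω', mΩ', P', hP', Y₂, Y₃, hY₂, hY₃, hiY₂, hiY₃, hmapY₂, hmapY₃, hmart'⟩ := h₂₃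
  -- the conditional distribution kernel of Y₃ given Y₂
  set κ : Kernel ℝ ℝ := condDistrib Y₃ Y₂ P' with hκdef
  have hcp : μ₂ ⊗ₘ κ = P'.map (fun a => (Y₂ a, Y₃ a)) := by
    rw [← hmapY₂, hκdef, condDistrib, ← Measure.fst_map_prodMk (X := Y₂) hY₃]
    exact Measure.disintegrate _ _
  -- the barycenter property of κ
  have hbar : ∀ᵐ a ∂P', (∫ y, y ∂(κ (Y₂ a))) = Y₂ a := by
    filter_upwards [condExp_ae_eq_integral_condDistrib' hY₂ hiY₃, hmart'] with a ha hb
    rw [← ha]; exact hb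
  have hg_meas : StronglyMeasurable fun x => ∫ y, y ∂(κ x) := by
    exact StronglyMeasurable.integral_kernel_prod_right
      (f := fun (_ : ℝ) (y : ℝ) => y) (measurable_snd.stronglyMeasurable)
  have hA : ∀ᵐ x ∂μ₂, (∫ y, y ∂(κ x)) = x := by
    rw [← hmapY₂]
    have hms : MeasurableSet {x : ℝ | (∫ y, y ∂(κ x)) = x} :=
      measurableSet_eq_fun hg_meas.measurable measurable_id
    exact (ae_map_iff hY₂.aemeasurable hms).mpr hbar
  -- the glued space
  set η : Kernel Ω ℝ := κ.comap X₂ hX₂ with hηdef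
  haveI hηM : IsMarkovKernel η := by
    rw [hηdef]; exact Kernel.IsMarkovKernel.comap _ hX₂
  set Q : Measure (Ω × ℝ) := P ⊗ₘ η with hQdef
  haveI : IsProbabilityMeasure Q := by
    constructor
    rw [hQdef, Measure.compProd_apply_univ, measure_univ]
  have hZ₁ : Measurable fun p : Ω × ℝ => X₁ p.1 := hX₁.comp measurable_fst
  -- first marginal
  have hQfst : Q.map Prod.fst = P := Measure.fst_compProd P η
  have hmapZ₁ : Q.map (fun p : Ω × ℝ => X₁ p.1) = μ₁ := by
    have : (fun p : Ω × ℝ => X₁ p.1) = X₁ ∘ Prod.fst := rfl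
    rw [this, ← Measure.map_map hX₁ measurable_fst, hQfst, hmapX₁]
  -- third marginal
  have hmapZ₃ : Q.map (Prod.snd : Ω × ℝ → ℝ) = μ₃ := by
    ext s hs
    rw [Measure.map_apply measurable_snd hs, hQdef,
      Measure.compProd_apply (measurable_snd hs)]
    have h1 : ∀ ω, η ω (Prod.mk ω ⁻¹' (Prod.snd ⁻¹' s)) = κ (X₂ ω) s := by
      intro ω
      rw [hηdef, Kernel.comap_apply]
      congr 1
    simp_rw [h1]
    rw [← lintegral_map (κ.measurable_coe hs) hX₂, hmapX₂]
    have h2 : ∫⁻ x, κ x s ∂μ₂ = (μ₂ ⊗ₘ κ) (Prod.snd ⁻¹' s) := by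
      rw [Measure.compProd_apply (measurable_snd hs)]
      rfl
    rw [h2, hcp, Measure.map_apply (hY₂.prodMk hY₃) (measurable_snd hs)]
    rw [show (fun a => (Y₂ a, Y₃ a)) ⁻¹' (Prod.snd ⁻¹' s) = Y₃ ⁻¹' s from rfl,
      ← Measure.map_apply hY₃ hs, hmapY₃]
  -- integrability
  have hiZ₁ : Integrable (fun p : Ω × ℝ => X₁ p.1) Q := by
    have := (integrable_map_measure aestronglyMeasurable_id hZ₁.aemeasurable).mp
      (by rw [hmapZ₁]; exact hint₁)
    exact this
  have hiZ₃ : Integrable (fun p : Ω × ℝ => p.2) Q := by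
    have := (integrable_map_measure aestronglyMeasurable_id
      measurable_snd.aemeasurable).mp (by rw [hmapZ₃]; exact hint₃)
    exact this
  -- the barycenter property pulled back to Ω
  have hAP : ∀ᵐ ω ∂P, (∫ y, y ∂(κ (X₂ ω))) = X₂ ω := by
    have := hA
    rw [← hmapX₂] at this
    exact ae_of_ae_map hX₂.aemeasurable this
  refine ⟨Ω × ℝ, inferInstance, Q, inferInstance, fun p => X₁ p.1, Prod.snd,
    hZ₁, measurable_snd, hiZ₁, hiZ₃, hmapZ₁, hmapZ₃, ?_⟩
  -- the martingale property
  haveI : SigmaFinite (Q.trim hZ₁.comap_le) := by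
    have : IsFiniteMeasure (Q.trim hZ₁.comap_le) := isFiniteMeasure_trim _
    infer_instance
  haveI : SigmaFinite (P.trim hX₁.comap_le) := by
    have : IsFiniteMeasure (P.trim hX₁.comap_le) := isFiniteMeasure_trim _
    infer_instance
  refine (ae_eq_condExp_of_forall_setIntegral_eq hZ₁.comap_le hiZ₃
    (fun s _ _ => hiZ₁.integrableOn) ?_ ?_).symm
  · rintro s ⟨t, ht, rfl⟩ -
    have hAmeas : MeasurableSet (X₁ ⁻¹' t) := hX₁ ht
    have hset : (fun p : Ω × ℝ => X₁ p.1) ⁻¹' t = (X₁ ⁻¹' t) ×ˢ (univ : Set ℝ) := by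
      ext p; simp [Set.mem_prod]
    rw [hset, hQdef]
    rw [Measure.setIntegral_compProd hAmeas MeasurableSet.univ
      (f := fun p : Ω × ℝ => X₁ p.1) (hQdef ▸ hiZ₁.integrableOn)]
    rw [Measure.setIntegral_compProd hAmeas MeasurableSet.univ
      (f := fun p : Ω × ℝ => p.2) (hQdef ▸ hiZ₃.integrableOn)]
    -- reduce the inner integrals
    have hL : ∫ ω in X₁ ⁻¹' t, ∫ y in univ, X₁ ω ∂(η ω) ∂P
        = ∫ ω in X₁ ⁻¹' t, X₁ ω ∂P := by
      refine setIntegral_congr_ae hAmeas ?_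
      filter_upwards with ω _
      rw [Measure.restrict_univ, integral_const, probReal_univ, one_smul]
    have hR : ∫ ω in X₁ ⁻¹' t, ∫ y in univ, y ∂(η ω) ∂P
        = ∫ ω in X₁ ⁻¹' t, X₂ ω ∂P := by
      refine setIntegral_congr_ae hAmeas ?_
      filter_upwards [hAP] with ω hω _
      rw [Measure.restrict_univ, hηdef, Kernel.comap_apply, hω]
    rw [hL, hR]
    -- martingale property of (X₁, X₂)
    have h1 : ∫ ω in X₁ ⁻¹' t, X₂ ω ∂P
        = ∫ ω in X₁ ⁻¹' t, (P[X₂ | MeasurableSpace.comap X₁ Real.measurableSpace]) ω ∂P :=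
      (setIntegral_condExp hX₁.comap_le hiX₂ ⟨t, ht, rfl⟩).symm
    rw [h1]
    exact setIntegral_congr_ae hAmeas (by filter_upwards [hmart] with ω hω _ using hω.symm)
  · refine StronglyMeasurable.aestronglyMeasurable ?_
    exact (stronglyMeasurable_id.comp_measurable (Measurable.of_comap_le le_rfl))
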